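/- The number of noncrossing trees T on vertex set [n] such that every vertex i has at most one neighbor j in T with j > i is the Catalan number C_{n-1} = (1/n)·binomial(2n−2, n−1). -/

import Mathlib

/-- A graph on `Fin n` is noncrossing if it has no pair of edges `{a,c}` and `{b,d}`
with `a < b < c < d`. -/
def Noncrossing {n : ℕ} (G : SimpleGraph (Fin n)) : Prop :=
  ∀ a b c d : Fin n, a < b → b < c → c < d → G.Adj a c → G.Adj b d → False


def Ok (L : List ℕ) : Prop :=
  (∀ (i : ℕ) (h : i < L.length), i < L[i] ∧ L[i] ≤ L.length) ∧
  (∀ (i j : ℕ) (hi : i < L.length) (hj : j < L.length), i < j → j < L[i] → L[j] ≤ L[i])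

def enc : Tree Unit → List ℕ
  | .nil => []
  | .node _ l r =>
      ((enc l).length + 1) ::
        ((enc l).map (· + 1) ++ (enc r).map (· + ((enc l).length + 1)))

lemma enc_length : ∀ t : Tree Unit, (enc t).length = t.numNodes
  | .nil => rfl
  | .node _ l r => by
      simp only [enc, List.length_cons, List.length_append, List.length_map,
        Tree.numNodes, enc_length l, enc_length r]
      rfl

section node
variable (l r : Tree Unit)

lemma enc_node_length : (enc (.node () l r)).length = (enc l).length + (enc r).length + 1 := by
  simp only [enc, List.length_cons, List.length_append, List.length_map]

lemma enc_node_get0 : (enc (.node () l r))[0]'(by rw [enc_node_length]; omega) =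
    (enc l).length + 1 := rfl

lemma enc_node_getA (i : ℕ) (h1 : 0 < i) (h2 : i ≤ (enc l).length) :
    (enc (.node () l r))[i]'(by rw [enc_node_length]; omega) =
      (enc l)[i-1]'(by omega) + 1 := by
  show ((((enc l).length + 1) ::
        ((enc l).map (· + 1) ++ (enc r).map (· + ((enc l).length + 1))))[i]'(by
          simp only [List.length_cons, List.length_append, List.length_map]; omega)) = _
  rw [List.getElem_cons]
  rw [dif_neg (by omega : ¬ i = 0)]
  rw [List.getElem_append]
  rw [dif_pos (by simp only [List.length_map]; omega)]
  simp only [List.getElem_map]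

lemma enc_node_getB (i : ℕ) (h1 : (enc l).length < i)
    (h2 : i < (enc l).length + (enc r).length + 1) :
    (enc (.node () l r))[i]'(by rw [enc_node_length]; omega) =
      (enc r)[i - (enc l).length - 1]'(by omega) + ((enc l).length + 1) := by
  show ((((enc l).length + 1) ::
        ((enc l).map (· + 1) ++ (enc r).map (· + ((enc l).length + 1))))[i]'(by
          simp only [List.length_cons, List.length_append, List.length_map]; omega)) = _
  rw [List.getElem_cons]
  rw [dif_neg (by omega : ¬ i = 0)]
  rw [List.getElem_append]
  rw [dif_neg (by simp only [List.length_map]; omega)]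
  simp only [List.getElem_map, List.length_map]
  congr 2
  omega

end node

lemma Ok_enc : ∀ t : Tree Unit, Ok (enc t)
  | .nil => ⟨by simp [enc], by simp [enc]⟩
  | .node u l r => by
      cases u
      obtain ⟨hl1, hl2⟩ := Ok_enc l
      obtain ⟨hr1, hr2⟩ := Ok_enc r
      have hlen := enc_node_length l r
      constructor
      · intro i h
        rw [hlen] at h ⊢
        rcases Nat.eq_zero_or_pos i with rfl | hpos
        · rw [enc_node_get0]; omega
        · rcases Nat.lt_or_ge (enc l).length i with h1 | h1
          · rw [enc_node_getB l r i h1 h]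
            have := hr1 (i - (enc l).length - 1) (by omega)
            omega
          · rw [enc_node_getA l r i hpos h1]
            have := hl1 (i - 1) (by omega)
            omega
      · intro i j hi hj hij hjlt
        rw [hlen] at hi hj
        rcases Nat.eq_zero_or_pos i with rfl | hpos
        · rw [enc_node_get0] at hjlt ⊢
          rw [enc_node_getA l r j hij (by omega)]
          have := hl1 (j - 1) (by omega)
          omega
        · rcases Nat.lt_or_ge (enc l).length i with h1 | h1
          · rw [enc_node_getB l r i h1 hi] at hjlt ⊢
            have hBi := hr1 (i - (enc l).length - 1) (by omega)
            have hja : (enc l).length < j := by omega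
            rw [enc_node_getB l r j hja hj]
            have := hr2 (i - (enc l).length - 1) (j - (enc l).length - 1)
              (by omega) (by omega) (by omega) (by omega)
            omega
          · rw [enc_node_getA l r i hpos h1] at hjlt ⊢
            have hAi := hl1 (i - 1) (by omega)
            have hj2 : j ≤ (enc l).length := by omega
            rw [enc_node_getA l r j (by omega) hj2]
            have := hl2 (i - 1) (j - 1) (by omega) (by omega) (by omega) (by omega)
            omega

lemma enc_inj : ∀ t1 t2 : Tree Unit, enc t1 = enc t2 → t1 = t2
  | .nil, .nil, _ => rfl
  | .nil, .node u l r, h => by simp [enc] at h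
  | .node u l r, .nil, h => by simp [enc] at h
  | .node u l r, .node u' l' r', h => by
      cases u; cases u'
      simp only [enc, List.cons.injEq] at h
      obtain ⟨h1, h2⟩ := h
      have ha : (enc l).length = (enc l').length := by omega
      rw [← ha] at h2
      obtain ⟨hL, hR⟩ := List.append_inj h2 (by simp [ha])
      have hl : enc l = enc l' :=
        List.map_injective_iff.mpr (add_left_injective 1) hL
      have hr : enc r = enc r' :=
        List.map_injective_iff.mpr (add_left_injective ((enc l).length + 1)) hR
      rw [enc_inj l l' hl, enc_inj r r' hr]

lemma enc_surj_aux : ∀ n : ℕ, ∀ L : List ℕ, L.length ≤ n → Ok L → ∃ t, enc t = L := by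
  intro n
  induction n with
  | zero =>
    intro L hL _
    have : L = [] := List.length_eq_zero_iff.mp (by omega)
    exact ⟨.nil, by simp [enc, this]⟩
  | succ n ih =>
    rintro (_ | ⟨c, M⟩) hL hOk
    · exact ⟨.nil, rfl⟩
    obtain ⟨h1, h2⟩ := hOk
    have hlen : (c :: M).length = M.length + 1 := by simp
    have hc : 0 < c ∧ c ≤ M.length + 1 := by
      have := h1 0 (by simp)
      simpa [hlen] using this
    set a := c - 1 with hadef
    have haM : a ≤ M.length := by omega
    -- basic facts about entries of M
    have hM1 : ∀ k (hk : k < M.length), k + 1 < M[k] ∧ M[k] ≤ M.length + 1 := by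
      intro k hk
      have := h1 (k+1) (by simp; omega)
      simpa [hlen] using this
    have hM0 : ∀ k (hk : k < M.length), k + 1 < c → M[k] ≤ c := by
      intro k hk h
      have := h2 0 (k+1) (by simp) (by simp; omega) (by omega) (by simpa using h)
      simpa [hlen] using this
    have hM2 : ∀ k k' (hk : k < M.length) (hk' : k' < M.length), k < k' →
        k' + 1 < M[k] → M[k'] ≤ M[k] := by
      intro k k' hk hk' hlt h
      have := h2 (k+1) (k'+1) (by simp; omega) (by simp; omega) (by omega) (by simpa using h)
      simpa using this
    set A := M.take a with hA
    set B := M.drop a with hB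
    have hAlen : A.length = a := by simp [hA, haM]
    have hBlen : B.length = M.length - a := by simp [hB]
    have hAget : ∀ k (hk : k < a), A[k]'(by omega) = M[k]'(by omega) := by
      intro k hk; simp [hA]
    have hBget : ∀ k (hk : k < M.length - a), B[k]'(by omega) = M[a + k]'(by omega) := by
      intro k hk; simp [hB]
    have hOkA : Ok (A.map (· - 1)) := by
      constructor
      · intro i h
        simp only [List.length_map, hAlen] at h ⊢
        rw [List.getElem_map]
        rw [hAget i h]
        have := hM1 i (by omega)
        have := hM0 i (by omega) (by omega)
        omega
      · intro i j hi hj hij hjlt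
        simp only [List.length_map, hAlen] at hi hj
        rw [List.getElem_map] at hjlt ⊢
        rw [List.getElem_map]
        rw [hAget i hi] at hjlt ⊢
        rw [hAget j hj]
        have h1i := hM1 i (by omega)
        have := hM2 i j (by omega) (by omega) hij (by omega)
        omega
    have hOkB : Ok (B.map (· - c)) := by
      constructor
      · intro i h
        simp only [List.length_map, hBlen] at h ⊢
        rw [List.getElem_map]
        rw [hBget i h]
        have := hM1 (a + i) (by omega)
        omega
      · intro i j hi hj hij hjlt
        simp only [List.length_map, hBlen] at hi hj
        rw [List.getElem_map] at hjlt ⊢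
        rw [List.getElem_map]
        rw [hBget i hi] at hjlt ⊢
        rw [hBget j hj]
        have h1i := hM1 (a + i) (by omega)
        have h1j := hM1 (a + j) (by omega)
        have := hM2 (a + i) (a + j) (by omega) (by omega) (by omega) (by omega)
        omega
    obtain ⟨l, hl⟩ := ih (A.map (· - 1)) (by simp [hAlen]; omega) hOkA
    obtain ⟨r, hr⟩ := ih (B.map (· - c)) (by simp [hBlen]; omega) hOkB
    refine ⟨.node () l r, ?_⟩
    have hllen : (enc l).length = a := by rw [hl]; simp [hAlen]
    have hmapA : (A.map (· - 1)).map (· + 1) = A := by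
      apply List.ext_getElem (by simp)
      intro k hk1 hk2
      simp only [List.getElem_map]
      have hk : k < a := by simpa [hAlen] using hk2
      rw [hAget k hk]
      have := hM1 k (by omega)
      omega
    have hmapB : (B.map (· - c)).map (· + c) = B := by
      apply List.ext_getElem (by simp)
      intro k hk1 hk2
      simp only [List.getElem_map]
      have hk : k < M.length - a := by simpa [hBlen] using hk2
      rw [hBget k hk]
      have := hM1 (a + k) (by omega)
      omega
    show ((enc l).length + 1) :: ((enc l).map (· + 1) ++ (enc r).map (· + ((enc l).length + 1))) = c :: M
    rw [hllen, hl, hr]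
    have hca : a + 1 = c := by omega
    rw [hca, hmapA, hmapB]
    rw [List.take_append_drop]

def PPfun (m : ℕ) (p : ℕ → ℕ) : Prop :=
  (∀ i < m, i < p i ∧ p i ≤ m) ∧
  (∀ i j : ℕ, i < j → j < m → j < p i → p j ≤ p i) ∧
  (∀ i, m ≤ i → p i = 0)

def FG (m : ℕ) (p : ℕ → ℕ) : SimpleGraph (Fin (m+1)) :=
  SimpleGraph.fromRel (fun i j => (i : ℕ) < m ∧ p i = j)

lemma FG_adj {m : ℕ} {p : ℕ → ℕ} (hp : PPfun m p) (i j : Fin (m+1)) :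
    (FG m p).Adj i j ↔ (((i:ℕ) < m ∧ p i = j) ∨ ((j:ℕ) < m ∧ p j = i)) := by
  rw [FG, SimpleGraph.fromRel_adj]
  constructor
  · rintro ⟨-, h⟩; exact h
  · intro h
    refine ⟨?_, h⟩
    rcases h with ⟨h1, h2⟩ | ⟨h1, h2⟩
    · have hlt := (hp.1 i h1).1
      rw [h2] at hlt
      exact fun he => by rw [he] at hlt; omega
    · have hlt := (hp.1 j h1).1
      rw [h2] at hlt
      exact fun he => by rw [he] at hlt; omega

lemma FG_adj_lt {m : ℕ} {p : ℕ → ℕ} (hp : PPfun m p) {i j : Fin (m+1)}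
    (h : (FG m p).Adj i j) (hij : i < j) : (i:ℕ) < m ∧ p i = j := by
  rcases (FG_adj hp i j).mp h with h' | ⟨h1, h2⟩
  · exact h'
  · exfalso
    have hlt := (hp.1 j h1).1
    rw [h2] at hlt
    rw [Fin.lt_def] at hij
    omega

lemma FG_unique {m : ℕ} {p : ℕ → ℕ} (hp : PPfun m p) :
    ∀ i j j' : Fin (m+1), (FG m p).Adj i j → (FG m p).Adj i j' →
      i < j → i < j' → j = j' := by
  intro i j j' hj hj' h1 h2
  have e1 := (FG_adj_lt hp hj h1).2
  have e2 := (FG_adj_lt hp hj' h2).2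
  exact Fin.ext (by omega)

lemma FG_noncrossing {m : ℕ} {p : ℕ → ℕ} (hp : PPfun m p) :
    ∀ a b c d : Fin (m+1), a < b → b < c → c < d →
      (FG m p).Adj a c → (FG m p).Adj b d → False := by
  intro a b c d hab hbc hcd hac hbd
  have e1 := (FG_adj_lt hp hac (hab.trans hbc)).2
  have e2 := (FG_adj_lt hp hbd (hbc.trans hcd)).2
  rw [Fin.lt_def] at hab hbc hcd
  have hbm : (b:ℕ) < m := by
    have := d.isLt; omega
  have := hp.2.1 a b hab hbm (by omega)
  omega

lemma FG_reach {m : ℕ} {p : ℕ → ℕ} (hp : PPfun m p) :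
    ∀ (k : ℕ) (i : Fin (m+1)), m - (i:ℕ) ≤ k →
      (FG m p).Reachable i ⟨m, Nat.lt_succ_self m⟩ := by
  intro k
  induction k with
  | zero =>
    intro i hi
    have he : i = ⟨m, Nat.lt_succ_self m⟩ := by
      apply Fin.ext; simp only [Fin.val_mk]; have := i.isLt; omega
    rw [he]
  | succ k ih =>
    intro i hi
    rcases Nat.lt_or_ge (i:ℕ) m with him | him
    · have hpi := hp.1 i him
      have hadj : (FG m p).Adj i ⟨p i, by omega⟩ :=
        (FG_adj hp i ⟨p i, by omega⟩).mpr (Or.inl ⟨him, rfl⟩)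
      exact hadj.reachable.trans (ih ⟨p i, by omega⟩ (by simp only [Fin.val_mk]; omega))
    · have he : i = ⟨m, Nat.lt_succ_self m⟩ := by
        apply Fin.ext; simp only [Fin.val_mk]; have := i.isLt; omega
      rw [he]

lemma acyclic_of_unique_larger {N : ℕ} (G : SimpleGraph (Fin N))
    (hU : ∀ i j j' : Fin N, G.Adj i j → G.Adj i j' → i < j → i < j' → j = j') :
    G.IsAcyclic := by
  intro v c hc
  classical
  have hne : c.support.toFinset.Nonempty := ⟨v, by simp⟩
  set u := c.support.toFinset.min' hne with hu
  have humem : u ∈ c.support := by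
    have := c.support.toFinset.min'_mem hne
    simpa using this
  have hmin : ∀ x ∈ c.support, u ≤ x := by
    intro x hx
    exact c.support.toFinset.min'_le x (by simpa using hx)
  have hminTail : ∀ x ∈ c.support.tail, u ≤ x := by
    intro x hx
    exact hmin x (List.mem_of_mem_tail hx)
  have hc' : (c.rotate u humem).IsCycle := hc.rotate humem
  have hmin' : ∀ x ∈ (c.rotate u humem).support, u ≤ x := by
    intro x hx
    rw [SimpleGraph.Walk.support_eq_cons, List.mem_cons] at hx
    rcases hx with heq | hx
    · exact heq.symm.le
    · exact hminTail x ((SimpleGraph.Walk.support_rotate c u humem).mem_iff.mp hx)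
  generalize hceq : c.rotate u humem = c' at hc' hmin'
  cases c' with
  | nil => exact hc'.ne_nil rfl
  | @cons _ w _ h q =>
    have hwmem : w ∈ (SimpleGraph.Walk.cons h q).support := by
      rw [SimpleGraph.Walk.support_cons]
      exact List.mem_cons_of_mem _ q.start_mem_support
    have hw : u < w := lt_of_le_of_ne (hmin' w hwmem) (h.ne)
    obtain ⟨x, h', q'', hq⟩ := SimpleGraph.Walk.exists_eq_cons_of_ne (h.ne) q.reverse
    have hxmem : x ∈ (SimpleGraph.Walk.cons h q).support := by
      rw [SimpleGraph.Walk.support_cons]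
      apply List.mem_cons_of_mem
      have : x ∈ q.reverse.support := by
        rw [hq, SimpleGraph.Walk.support_cons]
        exact List.mem_cons_of_mem _ q''.start_mem_support
      rwa [SimpleGraph.Walk.support_reverse, List.mem_reverse] at this
    have hx : u < x := lt_of_le_of_ne (hmin' x hxmem) (h'.ne)
    have hwx : w = x := hU u w x h h' hw hx
    have hmemq : s(u, x) ∈ q.edges := by
      have : s(u, x) ∈ q.reverse.edges := by
        rw [hq, SimpleGraph.Walk.edges_cons]
        exact List.mem_cons_self
      rwa [SimpleGraph.Walk.edges_reverse, List.mem_reverse] at this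
    have hnodup : ((SimpleGraph.Walk.cons h q).edges).Nodup := hc'.edges_nodup
    rw [SimpleGraph.Walk.edges_cons, List.nodup_cons] at hnodup
    exact hnodup.1 (hwx ▸ hmemq)

lemma FG_isTree {m : ℕ} {p : ℕ → ℕ} (hp : PPfun m p) : (FG m p).IsTree := by
  constructor
  · constructor
    intro i j
    exact (FG_reach hp m i (by omega)).trans (FG_reach hp m j (by omega)).symm
  · exact acyclic_of_unique_larger _ (FG_unique hp)

-- Existence of a larger neighbor in a tree with the unique-larger-neighbor property.
lemma exists_larger_neighbor {m : ℕ} {T : SimpleGraph (Fin (m+1))}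
    (hT : T.IsTree)
    (hU : ∀ i j j' : Fin (m+1), T.Adj i j → T.Adj i j' → i < j → i < j' → j = j')
    (i : Fin (m+1)) (hi : (i:ℕ) < m) : ∃ j, T.Adj i j ∧ i < j := by
  classical
  have hcard : T.edgeFinset.card + 1 = m + 1 := by
    simpa [Fintype.card_fin] using hT.card_edgeFinset
  -- min and max of an edge
  set fmin : Sym2 (Fin (m+1)) → Fin (m+1) :=
    Sym2.lift ⟨fun a b => min a b, fun a b => min_comm a b⟩ with hfmin
  set fmax : Sym2 (Fin (m+1)) → Fin (m+1) :=
    Sym2.lift ⟨fun a b => max a b, fun a b => max_comm a b⟩ with hfmax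
  have hedge : ∀ e ∈ T.edgeFinset, T.Adj (fmin e) (fmax e) ∧ fmin e < fmax e
      ∧ e = s(fmin e, fmax e) := by
    intro e he
    induction e with
    | _ a b =>
      rw [SimpleGraph.mem_edgeFinset, SimpleGraph.mem_edgeSet] at he
      rcases le_or_gt a b with hab | hab
      · have hlt : a < b := lt_of_le_of_ne hab (by rintro rfl; exact T.irrefl he)
        have h1 : fmin s(a, b) = a := by
          rw [hfmin, Sym2.lift_mk]; exact min_eq_left hab
        have h2 : fmax s(a, b) = b := by
          rw [hfmax, Sym2.lift_mk]; exact max_eq_right hab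
        rw [h1, h2]
        exact ⟨he, hlt, rfl⟩
      · have h1 : fmin s(a, b) = b := by
          rw [hfmin, Sym2.lift_mk]; exact min_eq_right hab.le
        have h2 : fmax s(a, b) = a := by
          rw [hfmax, Sym2.lift_mk]; exact max_eq_left hab.le
        rw [h1, h2]
        exact ⟨he.symm, hab, Sym2.eq_swap⟩
  have hinj : ∀ e₁ ∈ T.edgeFinset, ∀ e₂ ∈ T.edgeFinset, fmin e₁ = fmin e₂ → e₁ = e₂ := by
    intro e₁ h₁ e₂ h₂ hmin
    obtain ⟨ha₁, hl₁, he₁⟩ := hedge e₁ h₁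
    obtain ⟨ha₂, hl₂, he₂⟩ := hedge e₂ h₂
    rw [hmin] at ha₁ hl₁
    have := hU (fmin e₂) (fmax e₁) (fmax e₂) ha₁ ha₂ hl₁ hl₂
    rw [he₁, he₂, hmin, this]
  have hsub : T.edgeFinset.image fmin ⊆ Finset.univ.filter (fun x : Fin (m+1) => (x:ℕ) < m) := by
    intro x hx
    rw [Finset.mem_image] at hx
    obtain ⟨e, he, rfl⟩ := hx
    obtain ⟨-, hl, -⟩ := hedge e he
    rw [Finset.mem_filter]
    refine ⟨Finset.mem_univ _, ?_⟩
    rw [Fin.lt_def] at hl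
    have := (fmax e).isLt
    omega
  have hcard2 : (Finset.univ.filter (fun x : Fin (m+1) => (x:ℕ) < m)).card = m := by
    have : (Finset.univ.filter (fun x : Fin (m+1) => (x:ℕ) < m)) =
        ({⟨m, Nat.lt_succ_self m⟩} : Finset (Fin (m+1)))ᶜ := by
      ext x
      simp only [Finset.mem_filter, Finset.mem_univ, true_and, Finset.mem_compl,
        Finset.mem_singleton]
      constructor
      · intro h heq; rw [heq] at h; simp at h
      · intro h
        have := x.isLt
        rcases Nat.lt_or_ge (x:ℕ) m with h' | h'
        · exact h'
        · exact absurd (Fin.ext (by omega : (x:ℕ) = m)) h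
    rw [this, Finset.card_compl, Finset.card_singleton, Fintype.card_fin]
    omega
  have himg : (T.edgeFinset.image fmin).card = m := by
    rw [Finset.card_image_of_injOn hinj]
    omega
  have heq : T.edgeFinset.image fmin = Finset.univ.filter (fun x : Fin (m+1) => (x:ℕ) < m) :=
    Finset.eq_of_subset_of_card_le hsub (by omega)
  have hmem : i ∈ T.edgeFinset.image fmin := by
    rw [heq, Finset.mem_filter]
    exact ⟨Finset.mem_univ _, hi⟩
  rw [Finset.mem_image] at hmem
  obtain ⟨e, he, hfe⟩ := hmem
  obtain ⟨ha, hl, -⟩ := hedge e he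
  exact ⟨fmax e, by rw [← hfe]; exact ha, by rw [← hfe]; exact hl⟩

lemma FG_surj {m : ℕ} (T : SimpleGraph (Fin (m+1))) (hT : T.IsTree)
    (hNC : ∀ a b c d : Fin (m+1), a < b → b < c → c < d → T.Adj a c → T.Adj b d → False)
    (hU : ∀ i j j' : Fin (m+1), T.Adj i j → T.Adj i j' → i < j → i < j' → j = j') :
    ∃ p : ℕ → ℕ, PPfun m p ∧ FG m p = T := by
  classical
  have hex : ∀ (i : ℕ) (hi : i < m),
      ∃ j : Fin (m+1), T.Adj ⟨i, by omega⟩ j ∧ (⟨i, by omega⟩ : Fin (m+1)) < j :=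
    fun i hi => exists_larger_neighbor hT hU ⟨i, by omega⟩ hi
  refine ⟨fun i => if h : i < m then ((hex i h).choose : ℕ) else 0, ?_, ?_⟩ <;>
    set p : ℕ → ℕ := fun i => if h : i < m then ((hex i h).choose : ℕ) else 0 with hpdef
  all_goals {
    have hpval : ∀ i (h : i < m), p i = ((hex i h).choose : ℕ) := fun i h => dif_pos h
    have hlt : ∀ i (h : i < m), i < p i := by
      intro i h; rw [hpval i h]
      have := ((hex i h).choose_spec).2
      rwa [Fin.lt_def] at this
    have hle : ∀ i (h : i < m), p i ≤ m := by
      intro i h; rw [hpval i h]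
      exact Nat.lt_succ_iff.mp ((hex i h).choose.isLt)
    have hadj : ∀ i (h : i < m), T.Adj ⟨i, by omega⟩ ⟨p i, by have := hle i h; omega⟩ := by
      intro i h
      have := ((hex i h).choose_spec).1
      convert this using 2
      exact hpval i h
    have huniq : ∀ (i : ℕ) (h : i < m) (j : Fin (m+1)),
        T.Adj ⟨i, by omega⟩ j → (i : ℕ) < (j : ℕ) → (j : ℕ) = p i := by
      intro i h j hj hij
      have := hU ⟨i, by omega⟩ j ⟨p i, by have := hle i h; omega⟩ hj (hadj i h)
        (by rw [Fin.lt_def]; exact hij) (by rw [Fin.lt_def]; exact hlt i h)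
      rw [this]
    first
    | -- PPfun goal
      refine ⟨fun i hi => ⟨hlt i hi, hle i hi⟩, ?_, fun i hi => dif_neg (Nat.not_lt.mpr hi)⟩
      intro i j hij hjm hjpi
      by_contra hcon
      push_neg at hcon
      have him : i < m := by omega
      exact hNC ⟨i, by omega⟩ ⟨j, by omega⟩ ⟨p i, by have := hle i him; omega⟩
        ⟨p j, by have := hle j hjm; omega⟩
        (by rw [Fin.lt_def]; exact hij) (by rw [Fin.lt_def]; exact hjpi)
        (by rw [Fin.lt_def]; exact hcon) (hadj i him) (hadj j hjm)
    | -- graph equality goal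
      (ext i j
       have hp : PPfun m p := by
         refine ⟨fun i hi => ⟨hlt i hi, hle i hi⟩, ?_, fun i hi => dif_neg (Nat.not_lt.mpr hi)⟩
         intro i j hij hjm hjpi
         by_contra hcon
         push_neg at hcon
         have him : i < m := by omega
         exact hNC ⟨i, by omega⟩ ⟨j, by omega⟩ ⟨p i, by have := hle i him; omega⟩
           ⟨p j, by have := hle j hjm; omega⟩
           (by rw [Fin.lt_def]; exact hij) (by rw [Fin.lt_def]; exact hjpi)
           (by rw [Fin.lt_def]; exact hcon) (hadj i him) (hadj j hjm)
       rw [FG_adj hp i j]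
       constructor
       · rintro (⟨h1, h2⟩ | ⟨h1, h2⟩)
         · have := hadj i h1
           have hei : (⟨(i:ℕ), by omega⟩ : Fin (m+1)) = i := Fin.ext rfl
           have hej : (⟨p i, by have := hle i h1; omega⟩ : Fin (m+1)) = j := Fin.ext h2
           rwa [hei, hej] at this
         · have := hadj j h1
           have hei : (⟨(j:ℕ), by omega⟩ : Fin (m+1)) = j := Fin.ext rfl
           have hej : (⟨p j, by have := hle j h1; omega⟩ : Fin (m+1)) = i := Fin.ext h2
           rw [hei, hej] at this
           exact this.symm
       · intro h
         rcases lt_trichotomy i j with hij | hij | hij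
         · left
           have him : (i:ℕ) < m := by
             rw [Fin.lt_def] at hij
             have := j.isLt; omega
           refine ⟨him, ?_⟩
           have := huniq i him j (by exact h) (by rw [Fin.lt_def] at hij; exact hij)
           omega
         · exact absurd hij h.ne
         · right
           have hjm : (j:ℕ) < m := by
             rw [Fin.lt_def] at hij
             have := i.isLt; omega
           refine ⟨hjm, ?_⟩
           have := huniq j hjm i (by exact h.symm) (by rw [Fin.lt_def] at hij; exact hij)
           omega)
  }

lemma card_lists (m : ℕ) :
    Nat.card {L : List ℕ // Ok L ∧ L.length = m} = catalan m := by
  have h1 : Nat.card {t : Tree Unit // t.numNodes = m} =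
      Nat.card {L : List ℕ // Ok L ∧ L.length = m} := by
    apply Nat.card_eq_of_bijective
      (fun t => (⟨enc t.1, Ok_enc t.1, by rw [enc_length, t.2]⟩ :
        {L : List ℕ // Ok L ∧ L.length = m}))
    constructor
    · rintro ⟨t1, h1⟩ ⟨t2, h2⟩ h
      simp only [Subtype.mk.injEq] at h
      exact Subtype.ext (enc_inj t1 t2 h)
    · rintro ⟨L, hOk, hlen⟩
      obtain ⟨t, ht⟩ := enc_surj_aux L.length L (le_refl _) hOk
      exact ⟨⟨t, by rw [← enc_length, ht, hlen]⟩, Subtype.ext ht⟩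
  rw [← h1, ← BinaryTree.treesOfNumNodesEq_card_eq_catalan, ← Nat.card_eq_finsetCard]
  exact Nat.card_congr (Equiv.subtypeEquivRight fun t => BinaryTree.mem_treesOfNumNodesEq.symm)

lemma card_PP (m : ℕ) : Nat.card {p : ℕ → ℕ // PPfun m p} = catalan m := by
  rw [← card_lists m]
  symm
  apply Nat.card_eq_of_bijective (fun L =>
    (⟨fun i => L.1.getD i 0, by
      obtain ⟨L, hOk, hlen⟩ := L
      obtain ⟨h1, h2⟩ := hOk
      refine ⟨?_, ?_, ?_⟩
      · intro i hi
        show i < L.getD i 0 ∧ L.getD i 0 ≤ m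
        rw [List.getD_eq_getElem L 0 (show i < L.length by omega)]
        have := h1 i (by omega)
        omega
      · intro i j hij hjm hlt
        have hlt' : j < L.getD i 0 := hlt
        show L.getD j 0 ≤ L.getD i 0
        rw [List.getD_eq_getElem L 0 (show i < L.length by omega)] at hlt'
        rw [List.getD_eq_getElem L 0 (show j < L.length by omega),
          List.getD_eq_getElem L 0 (show i < L.length by omega)]
        exact h2 i j (by omega) (by omega) hij hlt'
      · intro i hi
        show L.getD i 0 = 0
        exact List.getD_eq_default L 0 (show L.length ≤ i by omega)⟩ : {p : ℕ → ℕ // PPfun m p}))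
  constructor
  · rintro ⟨L1, hOk1, hlen1⟩ ⟨L2, hOk2, hlen2⟩ h
    simp only [Subtype.mk.injEq] at h
    apply Subtype.ext
    show L1 = L2
    apply List.ext_getElem (by omega)
    intro i hi1 hi2
    have := congrFun h i
    rwa [List.getD_eq_getElem L1 0 hi1, List.getD_eq_getElem L2 0 hi2] at this
  · rintro ⟨p, hp1, hp2, hp3⟩
    refine ⟨⟨(List.range m).map p, ⟨?_, ?_⟩, by simp⟩, ?_⟩
    · intro i h
      simp only [List.length_map, List.length_range] at h ⊢
      rw [List.getElem_map, List.getElem_range]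
      exact hp1 i h
    · intro i j hi hj hij hlt
      simp only [List.length_map, List.length_range] at hi hj
      rw [List.getElem_map, List.getElem_range] at hlt ⊢
      rw [List.getElem_map, List.getElem_range]
      exact hp2 i j hij hj hlt
    · apply Subtype.ext
      funext i
      show ((List.range m).map p).getD i 0 = p i
      rcases Nat.lt_or_ge i m with h | h
      · rw [List.getD_eq_getElem _ 0 (by simp; omega)]
        rw [List.getElem_map, List.getElem_range]
      · rw [List.getD_eq_default _ _ (by simp; omega), hp3 i h]

lemma card_graphs (m : ℕ) :
    Nat.card {T : SimpleGraph (Fin (m+1)) //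
        T.IsTree ∧ Noncrossing T ∧
        ∀ i j j' : Fin (m+1), T.Adj i j → T.Adj i j' → i < j → i < j' → j = j'} =
      catalan m := by
  rw [← card_PP m]
  symm
  apply Nat.card_eq_of_bijective (fun p =>
    (⟨FG m p.1, FG_isTree p.2, FG_noncrossing p.2, FG_unique p.2⟩ :
      {T : SimpleGraph (Fin (m+1)) //
        T.IsTree ∧ Noncrossing T ∧
        ∀ i j j' : Fin (m+1), T.Adj i j → T.Adj i j' → i < j → i < j' → j = j'}))
  constructor
  · rintro ⟨p, hp⟩ ⟨p', hp'⟩ h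
    simp only [Subtype.mk.injEq] at h
    apply Subtype.ext
    funext i
    show p i = p' i
    rcases Nat.lt_or_ge i m with him | him
    · have h1 := hp.1 i him
      have hadj : (FG m p).Adj ⟨i, by omega⟩ ⟨p i, by omega⟩ :=
        (FG_adj hp _ _).mpr (Or.inl ⟨him, rfl⟩)
      rw [h] at hadj
      have := FG_adj_lt hp' hadj (by rw [Fin.lt_def]; simp only [Fin.val_mk]; omega)
      exact this.2.symm
    · rw [hp.2.2 i him, hp'.2.2 i him]
  · rintro ⟨T, hT, hNC, hU⟩
    obtain ⟨p, hp, hFG⟩ := FG_surj T hT hNC hU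
    exact ⟨⟨p, hp⟩, Subtype.ext hFG⟩

theorem card_noncrossing_trees_at_most_one_larger_neighbor (n : ℕ) (hn : 1 ≤ n) :
    Nat.card {T : SimpleGraph (Fin n) //
        T.IsTree ∧ Noncrossing T ∧
        ∀ i j j' : Fin n, T.Adj i j → T.Adj i j' → i < j → i < j' → j = j'} =
      catalan (n - 1) ∧
    catalan (n - 1) = (2 * n - 2).choose (n - 1) / n := by
  obtain ⟨m, rfl⟩ : ∃ m, n = m + 1 := ⟨n - 1, by omega⟩
  have hm : m + 1 - 1 = m := by omega
  rw [hm]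
  constructor
  · exact card_graphs m
  · have h2 : 2 * (m + 1) - 2 = 2 * m := by omega
    rw [h2, catalan_eq_centralBinom_div, Nat.centralBinom]
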